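/- As an identity of formal power series in z, Σ_{n∈ℤ} z^{n²} = Π_{k=1}^∞ (1+z^{2k−1})²(1−z^{2k}). Here Σ_{n∈ℤ} z^{n²} = 1 + 2Σ_{n≥1} z^{n²}. -/

import Mathlib

open PowerSeries Finset

/-- Gaussian binomial coefficient `[m choose j]` in the variable `Q = X^2`,
as a power series over `ℤ`, defined via the Pascal recursion. -/
noncomputable def gb : ℕ → ℕ → PowerSeries ℤ
  | 0, 0 => 1
  | 0, _+1 => 0
  | _+1, 0 => 1
  | m+1, j+1 => gb m (j+1) + X ^ (2*(m-j)) * gb m j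

lemma gb_def (m j : ℕ) : gb (m+1) (j+1) = gb m (j+1) + X ^ (2*(m-j)) * gb m j := by
  rw [gb]

lemma gb_zz : gb 0 0 = 1 := rfl

lemma gb_zero_right (m : ℕ) : gb m 0 = 1 := by cases m <;> rfl

lemma gb_eq_zero : ∀ {m j : ℕ}, m < j → gb m j = 0
  | 0, j+1, _ => rfl
  | m+1, j+1, h => by
    rw [gb, gb_eq_zero (by omega), gb_eq_zero (by omega)]; ring

lemma gb_self (m : ℕ) : gb m m = 1 := by
  induction m with
  | zero => rfl
  | succ m ih => rw [gb, gb_eq_zero (by omega), ih]; simp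

/-- partial products `∏_{k=1}^n (1 - X^(2k))`. -/
noncomputable def Pq (n : ℕ) : PowerSeries ℤ := ∏ k ∈ Finset.Ioc 0 n, (1 - X ^ (2*k))

lemma Pq_def (n : ℕ) : Pq n = ∏ k ∈ Finset.Ioc 0 n, (1 - X ^ (2*k) : PowerSeries ℤ) := rfl

lemma Pq_zero : Pq 0 = 1 := by simp [Pq]

lemma Pq_succ (n : ℕ) : Pq (n+1) = Pq n * (1 - X ^ (2*(n+1))) := by
  rw [Pq, Pq, ← Finset.prod_Ioc_succ_top (Nat.zero_le _)]

lemma constantCoeff_Pq (n : ℕ) : constantCoeff (Pq n) = 1 := by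
  rw [Pq, map_prod]
  apply Finset.prod_eq_one
  intro k hk
  rw [Finset.mem_Ioc] at hk
  rw [map_sub, map_one, map_pow, constantCoeff_X, zero_pow (by omega)]; ring

lemma Pq_ne_zero (n : ℕ) : Pq n ≠ 0 := by
  intro h
  have := constantCoeff_Pq n
  rw [h, map_zero] at this
  exact one_ne_zero this.symm

lemma prodA : ∀ m j : ℕ, j ≤ m → gb m j * Pq j * Pq (m - j) = Pq m
  | 0, 0, _ => by simp [gb, Pq_zero]
  | m+1, 0, _ => by simp [gb_zero_right, Pq_zero]
  | m+1, j+1, h => by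
    rcases eq_or_lt_of_le h with heq | hlt
    · -- j + 1 = m + 1
      have hj : j = m := by omega
      subst hj
      rw [gb_self]; simp [Pq_zero]
    · -- j + 1 ≤ m, so j < m
      have hjm : j + 1 ≤ m := by omega
      obtain ⟨a, ha⟩ : ∃ a, m = j + 1 + a := ⟨m - j - 1, by omega⟩
      subst ha
      have h1 : j + 1 + a - j = a + 1 := by omega
      have h2 : j + 1 + a - (j + 1) = a := by omega
      have h3 : j + 1 + a + 1 - (j + 1) = a + 1 := by omega
      have IH1 := prodA (j+1+a) (j+1) (by omega)
      have IH0 := prodA (j+1+a) j (by omega)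
      rw [h2] at IH1
      rw [h1] at IH0
      rw [gb, h1, h3, Pq_succ j, Pq_succ a, Pq_succ (j+1+a)]
      rw [Pq_succ j] at IH1
      rw [Pq_succ a] at IH0
      have : (2*(j+1+a+1)) = 2*(a+1) + 2*(j+1) := by ring
      rw [this, pow_add]
      linear_combination (1 - X^(2*(a+1)) : PowerSeries ℤ) * IH1
        + (X^(2*(a+1)) : PowerSeries ℤ) * (1 - X^(2*(j+1))) * IH0

lemma pascal2 : ∀ m j : ℕ, gb (m+1) (j+1) = X^(2*(j+1)) * gb m (j+1) + gb m j := by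
  intro m
  induction m with
  | zero =>
    intro j
    have d := gb_def 0 j
    cases j with
    | zero =>
      rw [d, gb_eq_zero (show 0 < 1 by omega), gb_zero_right]; simp
    | succ j =>
      rw [d, gb_eq_zero (show 0 < j+1 by omega), gb_eq_zero (show 0 < j+2 by omega)]; ring
  | succ m ih =>
    intro j
    cases j with
    | zero =>
      have d := gb_def (m+1) 0
      have d2 := gb_def m 0
      rw [Nat.sub_zero, gb_zero_right] at d
      rw [Nat.sub_zero, gb_zero_right] at d2
      have i1 := ih 0
      rw [gb_zero_right] at i1
      rw [gb_zero_right]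
      linear_combination d + i1 - X^(2*(0+1)) * d2
    | succ j =>
      rcases le_or_gt (j+1) m with hle | hlt
      · obtain ⟨c, hc⟩ : ∃ c, m = j + 1 + c := ⟨m - j - 1, by omega⟩
        subst hc
        have d := gb_def (j+1+c+1) (j+1)
        have d2 := gb_def (j+1+c) (j+1)
        have d1 := gb_def (j+1+c) j
        have i2 := ih (j+1)
        have i1 := ih j
        have h1 : j + 1 + c + 1 - (j+1) = c + 1 := by omega
        have h2 : j + 1 + c - (j+1) = c := by omega
        have h3 : j + 1 + c - j = c + 1 := by omega
        rw [h1] at d; rw [h2] at d2; rw [h3] at d1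
        rw [d]
        linear_combination i2 + X^(2*(c+1)) * i1 - X^(2*(j+2)) * d2 - d1
      · -- m ≤ j
        have d := gb_def (m+1) (j+1)
        have z2 : gb (m+1) (j+1+1) = 0 := gb_eq_zero (by omega)
        have zm2 : gb m (j+1+1) = 0 := gb_eq_zero (by omega)
        rcases eq_or_lt_of_le (Nat.lt_succ_iff.mp hlt) with heq | hlt2
        · -- m = j
          subst heq
          rw [d, z2, Nat.sub_self]
          simp
        · -- m < j
          have z1 : gb (m+1) (j+1) = 0 := gb_eq_zero (by omega)
          have zm1 : gb m (j+1) = 0 := gb_eq_zero (by omega)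
          have zmj : gb m j = 0 := gb_eq_zero hlt2
          rw [d, z2, z1]
          ring

lemma gbRec (m i : ℕ) : gb (m+2) (i+2) =
    X^(2*(i+2)) * gb m (i+2) + (1 + X^(2*(m+1))) * gb m (i+1)
      + X^(2*(m-i)) * gb m i := by
  have p : gb (m+2) (i+2) = X^(2*(i+2)) * gb (m+1) (i+2) + gb (m+1) (i+1) :=
    pascal2 (m+1) (i+1)
  have d2 := gb_def m (i+1)
  have d1 := gb_def m i
  rcases le_or_gt (i+1) m with hle | hlt
  · obtain ⟨c, hc⟩ : ∃ c, m = i + 1 + c := ⟨m - i - 1, by omega⟩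
    subst hc
    rw [show i+1+c-(i+1) = c by omega] at d2
    rw [show i+1+c-i = c+1 by omega] at d1
    rw [show i+1+c-i = c+1 by omega]
    rw [p, d2, d1]
    ring
  · have z2 : gb m (i+2) = 0 := gb_eq_zero (by omega)
    have z1 : gb m (i+1) = 0 := gb_eq_zero (by omega)
    rw [p, d2, d1, z2, z1]
    ring

/-- `|N - i|` as a natural number. -/
def dd (N i : ℕ) : ℕ := (N - i) + (i - N)

/-- `S N = ∑_{i=0}^{2N} gb (2N) i X^{(i-N)^2}`. -/
noncomputable def S (N : ℕ) : PowerSeries ℤ :=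
  ∑ i ∈ Finset.range (2*N+1), gb (2*N) i * X ^ (dd N i ^ 2)

lemma S_zero : S 0 = 1 := by
  simp [S, dd, gb_zz]

lemma dd_eq {N i a : ℕ} (h : N = i + a ∨ i = N + a) : dd N i = a := by
  unfold dd; omega

lemma sq_succ (a : ℕ) : (a+1)^2 = a^2 + 2*a + 1 := by ring

lemma arith_step (x y a : ℕ) (h : x + 2*a + 1 = y) : x + (a+1)^2 = y + a^2 := by
  calc x + (a+1)^2 = x + (a^2 + 2*a + 1) := by rw [sq_succ]
    _ = (x + 2*a + 1) + a^2 := by ring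
    _ = y + a^2 := by rw [h]

lemma S_succ (N : ℕ) : S (N+1) = (1 + X^(2*N+1))^2 * S N := by
  classical
  set c : ℕ → PowerSeries ℤ := fun i => gb (2*N) i * X ^ (dd N i ^ 2) with hc
  set F : ℕ → PowerSeries ℤ := fun i => gb (2*N+2) i * X ^ (dd (N+1) i ^ 2) with hF
  have hS : S (N+1) = ∑ i ∈ Finset.range (2*N+3), F i := by
    rw [S, show 2*(N+1)+1 = 2*N+3 from by ring, show 2*(N+1) = 2*N+2 from by ring]
  rw [hS, Finset.sum_range_succ', Finset.sum_range_succ']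
  have hterm : ∀ i ∈ Finset.range (2*N+1),
      F (i+1+1) = X^(2*N+1) * c (i+2) + (1 + X^(2*(2*N+1))) * c (i+1) + X^(2*N+1) * c i := by
    intro i hi
    rw [Finset.mem_range] at hi
    have e1 : 2*(i+2) + dd (N+1) (i+2) ^ 2 = (2*N+1) + dd N (i+2) ^ 2 := by
      rcases le_or_gt (i+2) N with h | h
      · rw [dd_eq (N := N+1) (i := i+2) (a := N-i-1) (Or.inl (by omega)),
            dd_eq (N := N) (i := i+2) (a := N-i-2) (Or.inl (by omega)),
            show N-i-1 = (N-i-2)+1 by omega]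
        exact arith_step _ _ _ (by omega)
      · rw [dd_eq (N := N+1) (i := i+2) (a := i+1-N) (Or.inr (by omega)),
            dd_eq (N := N) (i := i+2) (a := i+2-N) (Or.inr (by omega)),
            show i+2-N = (i+1-N)+1 by omega]
        exact (arith_step _ _ _ (by omega)).symm
    have e2 : dd (N+1) (i+2) = dd N (i+1) := by unfold dd; omega
    have e3 : 2*(2*N-i) + dd (N+1) (i+2) ^ 2 = (2*N+1) + dd N i ^ 2 := by
      rcases le_or_gt (i+2) (N+1) with h | h
      · rw [dd_eq (N := N+1) (i := i+2) (a := N-i-1) (Or.inl (by omega)),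
            dd_eq (N := N) (i := i) (a := N-i) (Or.inl (by omega)),
            show N-i = (N-i-1)+1 by omega]
        exact (arith_step _ _ _ (by omega)).symm
      · rw [dd_eq (N := N+1) (i := i+2) (a := i+1-N) (Or.inr (by omega)),
            dd_eq (N := N) (i := i) (a := i-N) (Or.inr (by omega)),
            show i+1-N = (i-N)+1 by omega]
        exact arith_step _ _ _ (by omega)
    have h1 : (X : PowerSeries ℤ)^(2*N+1) * X^(dd N (i+2) ^ 2)
        = X^(2*(i+2)) * X^(dd (N+1) (i+2) ^ 2) := by
      rw [← pow_add, ← pow_add, ← e1]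
    have h3 : (X : PowerSeries ℤ)^(2*N+1) * X^(dd N i ^ 2)
        = X^(2*(2*N-i)) * X^(dd (N+1) (i+2) ^ 2) := by
      rw [← pow_add, ← pow_add, ← e3]
    show gb (2*N+2) (i+2) * X ^ (dd (N+1) (i+2) ^ 2) = _
    rw [gbRec (2*N) i, hc]
    simp only []
    rw [e2] at h1 h3 ⊢
    linear_combination (-(gb (2*N) (i+2)) : PowerSeries ℤ) * h1 - gb (2*N) i * h3
  rw [Finset.sum_congr rfl hterm]
  rw [Finset.sum_add_distrib, Finset.sum_add_distrib, ← Finset.mul_sum, ← Finset.mul_sum,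
    ← Finset.mul_sum]
  have hSN : ∑ i ∈ Finset.range (2*N+1), c i = S N := rfl
  have hc1 : c (2*N+1) = 0 := by
    show gb (2*N) (2*N+1) * _ = 0
    rw [gb_eq_zero (by omega)]; ring
  have hc2 : c (2*N+2) = 0 := by
    show gb (2*N) (2*N+2) * _ = 0
    rw [gb_eq_zero (by omega)]; ring
  have hA : (∑ i ∈ Finset.range (2*N+1), c (i+1)) + c 0 = S N := by
    rw [← Finset.sum_range_succ' c (2*N+1), Finset.sum_range_succ, hc1, add_zero, hSN]
  have hB : (∑ i ∈ Finset.range (2*N+1), c (i+1+1)) + c (0+1) + c 0 = S N := by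
    have t1 := Finset.sum_range_succ' (fun i => c (i+1)) (2*N+1)
    have t2 := Finset.sum_range_succ' c (2*N+2)
    have t3 : ∑ i ∈ Finset.range (2*N+3), c i = S N := by
      rw [Finset.sum_range_succ, Finset.sum_range_succ, hc1, hc2, add_zero, add_zero, hSN]
    rw [← t1, ← t2, t3]
  have hgb1 : gb (2*N+2) 1 = X^2 * gb (2*N) 1 + 1 + X^(2*(2*N+1)) := by
    have a : gb (2*N+2) 1 = gb (2*N+1) 1 + X ^ (2*(2*N+1)) * gb (2*N+1) 0 :=
      gb_def (2*N+1) 0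
    have b : gb (2*N+1) 1 = X^(2*1) * gb (2*N) 1 + gb (2*N) 0 := pascal2 (2*N) 0
    rw [a, b, gb_zero_right, gb_zero_right]
    ring
  have hf01 : F 0 + F (0+1) = X^(2*N+1) * (c 0 + c (0+1)) + (1 + X^(2*(2*N+1))) * c 0 := by
    have hF0 : F 0 = X^((N+1)^2) := by
      show gb (2*N+2) 0 * X ^ (dd (N+1) 0 ^2) = _
      rw [gb_zero_right, dd_eq (N := N+1) (i := 0) (a := N+1) (Or.inl (by omega)), one_mul]
    have hF1 : F (0+1) = gb (2*N+2) 1 * X^(N^2) := by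
      show gb (2*N+2) 1 * X ^ (dd (N+1) 1 ^2) = _
      rw [dd_eq (N := N+1) (i := 1) (a := N) (Or.inl (by omega))]
    have hc0 : c 0 = X^(N^2) := by
      show gb (2*N) 0 * X ^ (dd N 0 ^2) = _
      rw [gb_zero_right, dd_eq (N := N) (i := 0) (a := N) (Or.inl (by omega)), one_mul]
    have k1 : (X : PowerSeries ℤ)^(2*N+1) * X^(N^2) = X^((N+1)^2) := by
      rw [← pow_add, show (2*N+1) + N^2 = (N+1)^2 from by ring]
    rw [hF0, hF1, hc0, hgb1]
    cases N with
    | zero =>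
      have : c (0+1) = 0 := by
        show gb 0 1 * _ = 0
        rw [gb_eq_zero (by omega)]; ring
      rw [this, gb_eq_zero (m := 2*0) (j := 1) (by omega)]
      ring
    | succ M =>
      have hcc1 : c (0+1) = gb (2*(M+1)) 1 * X^(M^2) := by
        show gb (2*(M+1)) 1 * X ^ (dd (M+1) 1 ^2) = _
        rw [dd_eq (N := M+1) (i := 1) (a := M) (Or.inl (by omega))]
      have k2 : (X : PowerSeries ℤ)^(2*(M+1)+1) * X^(M^2) = X^2 * X^((M+1)^2) := by
        rw [← pow_add, ← pow_add, show (2*(M+1)+1) + M^2 = 2 + (M+1)^2 from by ring]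
      rw [hcc1]
      linear_combination k1 + gb (2*(M+1)) 1 * k2
  linear_combination X^(2*N+1) * hB + (1 + X^(2*(2*N+1))) * hA + X^(2*N+1) * hSN + hf01

lemma prodS (N : ℕ) : ∏ k ∈ Finset.Icc 1 N, (1 + X^(2*k-1) : PowerSeries ℤ)^2 = S N := by
  induction N with
  | zero => simp [S_zero]
  | succ N ih =>
    rw [Finset.prod_Icc_succ_top (by omega), ih, show 2*(N+1)-1 = 2*N+1 by omega, S_succ]
    ring

/-- the key dissection: `gb (2N) i * Pq N` as a product of factors of high order. -/
lemma glemma (N i : ℕ) (hi : i ≤ 2*N) :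
    gb (2*N) i * Pq N =
      (∏ k ∈ Finset.Ioc (max i (2*N-i)) (2*N), (1 - X ^ (2*k) : PowerSeries ℤ)) *
        (∏ k ∈ Finset.Ioc (2*N - max i (2*N-i)) N, (1 - X ^ (2*k) : PowerSeries ℤ)) := by
  set u := max i (2*N-i) with hu
  have huN : N ≤ u := by omega
  have hu2N : u ≤ 2*N := by omega
  have hPuv : Pq u * Pq (2*N-u) = Pq i * Pq (2*N-i) := by
    rcases le_or_gt (2*N-i) i with h | h
    · rw [show u = i by omega]
    · rw [show u = 2*N-i by omega, show 2*N-(2*N-i) = i by omega, mul_comm]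
  apply mul_right_cancel₀ (mul_ne_zero (Pq_ne_zero u) (Pq_ne_zero (2*N-u)))
  have hA := prodA (2*N) i hi
  have split1 : Pq u * (∏ k ∈ Finset.Ioc u (2*N), (1 - X ^ (2*k) : PowerSeries ℤ)) = Pq (2*N) := by
    rw [Pq_def, Pq_def, Finset.prod_Ioc_consecutive _ (Nat.zero_le u) hu2N]
  have split2 : Pq (2*N-u) * (∏ k ∈ Finset.Ioc (2*N-u) N, (1 - X ^ (2*k) : PowerSeries ℤ)) = Pq N := by
    rw [Pq_def, Pq_def, Finset.prod_Ioc_consecutive _ (Nat.zero_le (2*N-u)) (by omega)]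
  calc gb (2*N) i * Pq N * (Pq u * Pq (2*N-u))
      = (gb (2*N) i * Pq i * Pq (2*N-i)) * Pq N := by rw [hPuv]; ring
    _ = Pq (2*N) * Pq N := by rw [hA]
    _ = (Pq u * ∏ k ∈ Finset.Ioc u (2*N), (1 - X ^ (2*k) : PowerSeries ℤ)) *
          (Pq (2*N-u) * ∏ k ∈ Finset.Ioc (2*N-u) N, (1 - X ^ (2*k) : PowerSeries ℤ)) := by
        rw [split1, split2]
    _ = _ := by ring

lemma dvd_prod_sub_one (s : Finset ℕ) (m : ℕ) (h : ∀ k ∈ s, m ≤ 2*k) :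
    (X : PowerSeries ℤ)^m ∣ (∏ k ∈ s, (1 - X ^ (2*k) : PowerSeries ℤ)) - 1 := by
  classical
  induction s using Finset.induction with
  | empty => simp
  | @insert a s' hx ih =>
    rw [Finset.prod_insert hx]
    have h1 : (X : PowerSeries ℤ)^m ∣ (1 - X ^ (2*a)) - 1 := by
      have : ((1 : PowerSeries ℤ) - X ^ (2*a)) - 1 = -(X^(2*a)) := by ring
      rw [this]
      exact (pow_dvd_pow X (h a (Finset.mem_insert_self a s'))).neg_right
    have h2 := ih (fun k hk => h k (Finset.mem_insert_of_mem hk))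
    have key : (1 - X ^ (2*a) : PowerSeries ℤ) * (∏ k ∈ s', (1 - X ^ (2*k))) - 1 =
        (1 - X ^ (2*a)) * ((∏ k ∈ s', (1 - X ^ (2*k))) - 1) + ((1 - X ^ (2*a)) - 1) := by
      ring
    rw [key]
    exact dvd_add (Dvd.dvd.mul_left h2 _) h1

lemma coeff_term (n N i : ℕ) (hnN : n ≤ N) (hi : i ≤ 2*N) :
    (PowerSeries.coeff n) (gb (2*N) i * Pq N * X ^ (dd N i ^ 2)) =
      if n = dd N i ^ 2 then 1 else 0 := by
  set u := max i (2*N-i) with hu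
  have huN : N ≤ u := by omega
  have hdd : dd N i = u - N := by unfold dd; omega
  set w := dd N i ^ 2 with hw
  have key : (X : PowerSeries ℤ)^(n+1) ∣ gb (2*N) i * Pq N * X ^ w - X ^ w := by
    rw [glemma N i hi, ← hu]
    set P1 := ∏ k ∈ Finset.Ioc u (2*N), (1 - X ^ (2*k) : PowerSeries ℤ) with hP1
    set P2 := ∏ k ∈ Finset.Ioc (2*N-u) N, (1 - X ^ (2*k) : PowerSeries ℤ) with hP2
    have hsplit : P1 * P2 * X ^ w - X ^ w
        = P2 * X ^ w * (P1 - 1) + ((P2 - 1) * X ^ w) := by ring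
    rw [hsplit]
    apply dvd_add
    · apply Dvd.dvd.mul_left
      apply dvd_prod_sub_one
      intro k hk
      rw [Finset.mem_Ioc] at hk
      omega
    · rcases le_or_gt (n+1) w with hle | hlt
      · exact Dvd.dvd.mul_left (pow_dvd_pow X hle) _
      · have hd2 : (X : PowerSeries ℤ)^(n+1-w) ∣ P2 - 1 := by
          apply dvd_prod_sub_one
          intro k hk
          rw [Finset.mem_Ioc] at hk
          -- n + 1 - w ≤ 2 * k ; k ≥ 2*N-u+1
          have hbound : n + 1 ≤ w + 2*(2*N-u+1) := by
            rw [hw, hdd]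
            rcases Nat.eq_zero_or_pos (u - N) with h0 | hpos
            · rw [h0]
              omega
            · obtain ⟨s, hs⟩ : ∃ s, u - N = s + 1 := ⟨u - N - 1, by omega⟩
              rw [hs, sq_succ]
              have h1 : 2*(2*N-u+1) ≥ 2*(N - s - 1) + 2 := by omega
              have h2 : s^2 + 2*s + 1 + (2*(N-s-1) + 2) ≥ n + 1 := by
                have := Nat.zero_le (s^2)
                omega
              omega
          omega
        have : (X : PowerSeries ℤ)^(n+1) = X^(n+1-w) * X^w := by
          rw [← pow_add]
          congr 1
          omega
        rw [this]
        exact mul_dvd_mul hd2 dvd_rfl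
  have hz : (PowerSeries.coeff n) (gb (2*N) i * Pq N * X ^ w - X ^ w) = 0 :=
    (PowerSeries.X_pow_dvd_iff.mp key) n (Nat.lt_succ_self n)
  rw [map_sub, sub_eq_zero] at hz
  rw [hz, PowerSeries.coeff_X_pow]

lemma count_lemma (n N : ℕ) (hnN : n ≤ N) :
    (∑ i ∈ Finset.range (2*N+1), (if n = dd N i ^ 2 then (1:ℤ) else 0)) =
      if n = 0 then 1 else if Nat.sqrt n ^ 2 = n then 2 else 0 := by
  by_cases h0 : n = 0
  · subst h0
    rw [if_pos rfl]
    rw [Finset.sum_eq_single_of_mem N (by rw [Finset.mem_range]; omega)]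
    · rw [dd_eq (N := N) (i := N) (a := 0) (Or.inl (by omega))]
      norm_num
    · intro i _ hne
      rw [if_neg]
      intro h
      have : dd N i = 0 := by
        have := Nat.pow_eq_zero.mp h.symm
        omega
      unfold dd at this
      omega
  · rw [if_neg h0]
    by_cases hsq : Nat.sqrt n ^ 2 = n
    · rw [if_pos hsq]
      set j := Nat.sqrt n with hj
      have hj1 : 1 ≤ j := by
        rcases Nat.eq_zero_or_pos j with h | h
        · rw [h] at hsq; simp at hsq; omega
        · exact h
      have hjN : j ≤ N := by
        have h1 : j ≤ j^2 := Nat.le_self_pow (by norm_num) j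
        omega
      rw [Finset.sum_boole]
      have hfilter : (Finset.range (2*N+1)).filter (fun i => n = dd N i ^ 2)
          = {N - j, N + j} := by
        ext i
        simp only [Finset.mem_filter, Finset.mem_range, Finset.mem_insert,
          Finset.mem_singleton]
        constructor
        · rintro ⟨hir, hin⟩
          have hddj : dd N i = j := by
            have : Nat.sqrt n = dd N i := by
              rw [hin, Nat.sqrt_eq']
            omega
          unfold dd at hddj
          omega
        · rintro (rfl | rfl)
          · refine ⟨by omega, ?_⟩
            rw [dd_eq (N := N) (i := N - j) (a := j) (Or.inl (by omega))]
            exact hsq.symm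
          · refine ⟨by omega, ?_⟩
            rw [dd_eq (N := N) (i := N + j) (a := j) (Or.inr (by omega))]
            exact hsq.symm
      rw [hfilter, Finset.card_pair (by omega)]
      norm_num
    · rw [if_neg hsq]
      apply Finset.sum_eq_zero
      intro i _
      rw [if_neg]
      intro h
      apply hsq
      rw [h, Nat.sqrt_eq']


/-- The theta series `∑_{n ∈ ℤ} z^(n²) = 1 + 2 ∑_{n ≥ 1} z^(n²)` as a formal power series
over `ℤ`: its `m`-th coefficient is `1` for `m = 0`, `2` if `m = n²` with `n ≥ 1`, and `0`
otherwise. -/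
def thetaPlus : PowerSeries ℤ :=
  PowerSeries.mk fun m => if m = 0 then 1 else if Nat.sqrt m ^ 2 = m then 2 else 0

/-- `∑_{n ∈ ℤ} z^(n²) = ∏_{k ≥ 1} (1 + z^(2k-1))² (1 - z^(2k))` as formal power series in
`z`.  The identity is expressed coefficient-by-coefficient: since the `k`-th factor is
`1 + O(z^(2k-1))`, the `n`-th coefficient of the infinite product equals that of any partial
product over `1 ≤ k ≤ N` with `N ≥ n`. -/
theorem thetaPlus_eq_prod (n N : ℕ) (hnN : n ≤ N) :
    PowerSeries.coeff n thetaPlus =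
      PowerSeries.coeff n
        (∏ k ∈ Finset.Icc 1 N,
          (1 + (PowerSeries.X : PowerSeries ℤ) ^ (2 * k - 1)) ^ 2 *
            (1 - (PowerSeries.X : PowerSeries ℤ) ^ (2 * k))) := by
  rw [Finset.prod_mul_distrib, prodS N]
  have hPq : ∏ k ∈ Finset.Icc 1 N, (1 - X^(2*k) : PowerSeries ℤ) = Pq N := by
    rw [Pq_def, ← Finset.Icc_add_one_left_eq_Ioc, zero_add]
  rw [hPq, S, Finset.sum_mul, map_sum]
  have hterm : ∀ i ∈ Finset.range (2*N+1),
      (PowerSeries.coeff n) (gb (2*N) i * X ^ (dd N i ^ 2) * Pq N)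
        = if n = dd N i ^ 2 then (1:ℤ) else 0 := by
    intro i hi
    rw [Finset.mem_range] at hi
    rw [mul_right_comm]
    exact coeff_term n N i hnN (by omega)
  rw [Finset.sum_congr rfl hterm, count_lemma n N hnN, thetaPlus, PowerSeries.coeff_mk]
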